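/- arXiv:1504.06837 — 4 statements merged into one kernel-verified Lean document; each statement's English description precedes it below -/
import Mathlib

section
/- Suppose Ω is partitioned into pairwise disjoint sets P_L (known positives), N_L (known negatives) and U (unlabeled instances) with P_L ∪ N_L ∪ U = Ω. Let P_U ⊆ U be nonempty (the latent positives) with P_L ∪ P_U ≠ Ω, and let r ∈ {1, …, |Ω|}. If P*_U ⊆ U is a set of surrogate positives satisfying |P*_U| = |P_U| and TPR(P*_U, r) ≥ TPR(P_U, r), then TPR(P_L ∪ P*_U, r) ≥ TPR(P_L ∪ P_U, r) and FPR(P_L ∪ P*_U, r) ≤ FPR(P_L ∪ P_U, r). -/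
open Finset

variable {α : Type*} [Fintype α] [DecidableEq α]

/-- `top S r`: the elements of `S` ranked in the top `r` positions.
Ranks are 1-based: the rank of `x` is `(rk x : ℕ) + 1`, so `rank x ≤ r ↔ (rk x : ℕ) < r`. -/
def topSet (rk : α ≃ Fin (Fintype.card α)) (S : Finset α) (r : ℕ) : Finset α :=
  S.filter fun x => ((rk x : Fin (Fintype.card α)) : ℕ) < r

/-- True positive rate of the positive set `S` at cutoff rank `r`. -/
noncomputable def TPR (rk : α ≃ Fin (Fintype.card α)) (S : Finset α) (r : ℕ) : ℝ :=
  (topSet rk S r).card / S.card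

/-- False positive rate of the positive set `S` at cutoff rank `r`:
the TPR of the complement `Ω \ S`. -/
noncomputable def FPR (rk : α ≃ Fin (Fintype.card α)) (S : Finset α) (r : ℕ) : ℝ :=
  TPR rk Sᶜ r

lemma card_fin_filter_lt (n r : ℕ) (hr : r ≤ n) :
    ((univ : Finset (Fin n)).filter fun i : Fin n => (i:ℕ) < r).card = r := by
  rcases eq_or_lt_of_le hr with h|h
  · subst h; rw [Finset.filter_true_of_mem (fun i _ => i.isLt)]; simp
  · have : ((univ : Finset (Fin n)).filter fun i : Fin n => (i:ℕ) < r) = Finset.Iio ⟨r, h⟩ := by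
      ext i; simp [Fin.lt_def]
    rw [this, Fin.card_Iio]

lemma topSet_univ_card (rk : α ≃ Fin (Fintype.card α)) (r : ℕ) (hr : r ≤ Fintype.card α) :
    (topSet rk (univ : Finset α) r).card = r := by
  have h1 : (topSet rk (univ : Finset α) r).image rk
      = (univ : Finset (Fin (Fintype.card α))).filter fun i : Fin (Fintype.card α) => (i:ℕ) < r := by
    ext i
    simp only [topSet, Finset.mem_image, Finset.mem_filter, Finset.mem_univ, true_and]
    constructor
    · rintro ⟨x, hx, rfl⟩; exact hx
    · intro hi; exact ⟨rk.symm i, by simpa using hi, by simp⟩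
  have := Finset.card_image_of_injective (topSet rk (univ : Finset α) r) rk.injective
  rw [h1] at this
  rw [← this, card_fin_filter_lt _ _ hr]

lemma topSet_subset (rk : α ≃ Fin (Fintype.card α)) (S : Finset α) (r : ℕ) :
    topSet rk S r ⊆ S := Finset.filter_subset _ _

lemma topSet_union (rk : α ≃ Fin (Fintype.card α)) (S T : Finset α) (r : ℕ) :
    topSet rk (S ∪ T) r = topSet rk S r ∪ topSet rk T r := Finset.filter_union _ _ _

lemma topSet_compl (rk : α ≃ Fin (Fintype.card α)) (S : Finset α) (r : ℕ) :
    topSet rk Sᶜ r = topSet rk (univ : Finset α) r \ topSet rk S r := by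
  ext x
  simp only [topSet, Finset.mem_filter, Finset.mem_sdiff, Finset.mem_compl,
    Finset.mem_univ, true_and, not_and]
  tauto

theorem stmt_5 (rk : α ≃ Fin (Fintype.card α)) (PL NL U : Finset α)
    (hPN : Disjoint PL NL) (hPU : Disjoint PL U) (hNU : Disjoint NL U)
    (hcover : PL ∪ NL ∪ U = Finset.univ)
    (PU : Finset α) (hPUsub : PU ⊆ U) (hPUne : PU.Nonempty)
    (hproper : PL ∪ PU ≠ Finset.univ)
    (r : ℕ) (hr1 : 1 ≤ r) (hr2 : r ≤ Fintype.card α)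
    (Pstar : Finset α) (hstarsub : Pstar ⊆ U) (hstarcard : Pstar.card = PU.card)
    (hstarTPR : TPR rk Pstar r ≥ TPR rk PU r) :
    TPR rk (PL ∪ Pstar) r ≥ TPR rk (PL ∪ PU) r ∧
      FPR rk (PL ∪ Pstar) r ≤ FPR rk (PL ∪ PU) r := by
  have hdPU : Disjoint PL PU := hPU.mono_right hPUsub
  have hdPs : Disjoint PL Pstar := hPU.mono_right hstarsub
  have hcards : (PL ∪ Pstar).card = (PL ∪ PU).card := by
    rw [Finset.card_union_of_disjoint hdPs, Finset.card_union_of_disjoint hdPU, hstarcard]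
  -- card of top sets of unions
  have hcardtop : ∀ S : Finset α, Disjoint PL S →
      (topSet rk (PL ∪ S) r).card = (topSet rk PL r).card + (topSet rk S r).card := by
    intro S hd
    rw [topSet_union, Finset.card_union_of_disjoint
      (hd.mono (topSet_subset rk PL r) (topSet_subset rk S r))]
  -- key: top card of Pstar ≥ that of PU
  have hPUpos : (0:ℝ) < PU.card := by exact_mod_cast hPUne.card_pos
  have hkey : (topSet rk PU r).card ≤ (topSet rk Pstar r).card := by
    have := hstarTPR
    unfold TPR at this
    rw [hstarcard] at this
    exact_mod_cast (div_le_div_iff_of_pos_right hPUpos).mp this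
  constructor
  · unfold TPR
    rw [hcards, hcardtop PU hdPU, hcardtop Pstar hdPs]
    gcongr
  · unfold FPR TPR
    have hc : ∀ S : Finset α, (PL ∪ S)ᶜ.card = Fintype.card α - (PL ∪ S).card := by
      intro S; rw [Finset.card_compl]
    have ht : ∀ S : Finset α, Disjoint PL S → (topSet rk (PL ∪ S)ᶜ r).card
        = r - ((topSet rk PL r).card + (topSet rk S r).card) := by
      intro S hd
      rw [topSet_compl, Finset.card_sdiff_of_subset (by
        intro x hx
        simp only [topSet, Finset.mem_filter, Finset.mem_univ, true_and] at *
        exact hx.2), topSet_univ_card rk r hr2, hcardtop S hd]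
    rw [ht PU hdPU, ht Pstar hdPs, hc PU, hc Pstar, hcards]
    gcongr
end

section
/- Suppose Ω is partitioned into pairwise disjoint sets P_L, N_L and U with P_L ∪ N_L ∪ U = Ω. Let P_U ⊆ U be nonempty with |P_U| = m and P_L ∪ P_U ≠ Ω, let r ∈ {1, …, |Ω|}, and let T be a real number with TPR(P_U, r) ≤ T. Let F = {S ⊆ U : |S| = m and TPR(S, r) ≥ T}, and suppose P*_U ∈ F attains the minimum of TPR(·, r) over F. Then for every S ∈ F, FPR(P_L ∪ S, r) ≤ FPR(P_L ∪ P*_U, r) ≤ FPR(P_L ∪ P_U, r); that is, FPR(P_L ∪ P*_U, r) is the greatest lower bound on FPR(P_L ∪ P_U, r) achievable by surrogate positive sets in F. -/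
open Finset

variable {α : Type*} [Fintype α] [DecidableEq α]

lemma topSet_compl_card (rk : α ≃ Fin (Fintype.card α)) (X : Finset α) (r : ℕ)
    (hr : r ≤ Fintype.card α) :
    (topSet rk Xᶜ r).card + (topSet rk X r).card = r := by
  have hdis : Disjoint (topSet rk Xᶜ r) (topSet rk X r) :=
    Finset.disjoint_filter_filter (disjoint_compl_left)
  have hun : topSet rk Xᶜ r ∪ topSet rk X r = topSet rk (univ : Finset α) r := by
    rw [topSet, topSet, topSet, ← Finset.filter_union,
      show Xᶜ ∪ X = (univ : Finset α) by rw [Finset.union_comm]; exact Finset.union_compl X]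
  rw [← Finset.card_union_of_disjoint hdis, hun, topSet_univ_card rk r hr]

/-- FPR formula for `PL ∪ S` with `S` disjoint from `PL`. -/
lemma FPR_formula (rk : α ≃ Fin (Fintype.card α)) (PL S : Finset α)
    (hd : Disjoint PL S) (r : ℕ) (hr : r ≤ Fintype.card α) :
    FPR rk (PL ∪ S) r =
      ((r : ℝ) - (topSet rk PL r).card - (topSet rk S r).card) /
        ((Fintype.card α : ℝ) - PL.card - S.card) := by
  have hsplit : (topSet rk (PL ∪ S) r).card
      = (topSet rk PL r).card + (topSet rk S r).card := by
    rw [topSet, Finset.filter_union, Finset.card_union_of_disjoint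
      (Finset.disjoint_filter_filter hd)]
    rfl
  have hnum := topSet_compl_card rk (PL ∪ S) r hr
  have hcardU : (PL ∪ S).card = PL.card + S.card := Finset.card_union_of_disjoint hd
  have hcc : ((PL ∪ S)ᶜ).card = Fintype.card α - (PL.card + S.card) := by
    rw [Finset.card_compl, hcardU]
  have hle : PL.card + S.card ≤ Fintype.card α := by
    rw [← hcardU]; exact Finset.card_le_univ _
  have hnumR : (((topSet rk (PL ∪ S)ᶜ r).card : ℝ))
      = (r : ℝ) - (topSet rk PL r).card - (topSet rk S r).card := by
    have : (topSet rk (PL ∪ S)ᶜ r).card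
        = r - ((topSet rk PL r).card + (topSet rk S r).card) := by omega
    rw [this]
    have hle2 : (topSet rk PL r).card + (topSet rk S r).card ≤ r := by omega
    push_cast [Nat.cast_sub hle2]
    ring
  unfold FPR TPR
  rw [hnumR, hcc]
  congr 1
  push_cast [Nat.cast_sub hle]
  ring

theorem stmt_7 (rk : α ≃ Fin (Fintype.card α)) (PL NL U : Finset α)
    (hPN : Disjoint PL NL) (hPU : Disjoint PL U) (hNU : Disjoint NL U)
    (hcover : PL ∪ NL ∪ U = Finset.univ)
    (PU : Finset α) (hPUsub : PU ⊆ U) (hPUne : PU.Nonempty)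
    (m : ℕ) (hPUcard : PU.card = m) (hproper : PL ∪ PU ≠ Finset.univ)
    (r : ℕ) (hr1 : 1 ≤ r) (hr2 : r ≤ Fintype.card α)
    (T : ℝ) (hT : TPR rk PU r ≤ T)
    (Pstar : Finset α) (hstarsub : Pstar ⊆ U) (hstarcard : Pstar.card = m)
    (hstarT : TPR rk Pstar r ≥ T)
    (hmin : ∀ S : Finset α, S ⊆ U → S.card = m → TPR rk S r ≥ T →
      TPR rk Pstar r ≤ TPR rk S r) :
    ∀ S : Finset α, S ⊆ U → S.card = m → TPR rk S r ≥ T →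
      FPR rk (PL ∪ S) r ≤ FPR rk (PL ∪ Pstar) r ∧
        FPR rk (PL ∪ Pstar) r ≤ FPR rk (PL ∪ PU) r := by
  intro S hSsub hScard hST
  have hm : 0 < m := hPUcard ▸ Finset.card_pos.mpr hPUne
  -- denominator positive
  have hDpos : (0 : ℝ) < (Fintype.card α : ℝ) - PL.card - m := by
    have hcard : (PL ∪ PU).card = PL.card + m := by
      rw [Finset.card_union_of_disjoint (hPU.mono_right hPUsub), hPUcard]
    have hlt : (PL ∪ PU).card < Fintype.card α := by
      rcases lt_or_eq_of_le (Finset.card_le_univ (PL ∪ PU)) with h | h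
      · simpa using h
      · exact absurd (Finset.eq_univ_of_card _ (by simpa using h)) hproper
    rw [hcard] at hlt
    have : (PL.card : ℝ) + m < Fintype.card α := by exact_mod_cast hlt
    linarith
  -- TPR expresses top card
  have htop : ∀ X : Finset α, X.card = m →
      ((topSet rk X r).card : ℝ) = m * TPR rk X r := by
    intro X hX
    unfold TPR
    rw [hX]
    field_simp
  -- general comparison
  have key : ∀ X Y : Finset α, X ⊆ U → Y ⊆ U → X.card = m → Y.card = m →
      TPR rk Y r ≤ TPR rk X r → FPR rk (PL ∪ X) r ≤ FPR rk (PL ∪ Y) r := by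
    intro X Y hX hY hXc hYc hle
    rw [FPR_formula rk PL X (hPU.mono_right hX) r hr2,
        FPR_formula rk PL Y (hPU.mono_right hY) r hr2, hXc, hYc,
        htop X hXc, htop Y hYc]
    rw [div_le_div_iff₀ hDpos hDpos]
    have := mul_le_mul_of_nonneg_left hle (by positivity : (0:ℝ) ≤ (m:ℝ))
    nlinarith
  exact ⟨key S Pstar hSsub hstarsub hScard hstarcard (hmin S hSsub hScard hST),
    key Pstar PU hstarsub hPUsub hstarcard hPUcard (le_trans hT hstarT)⟩
end

section
/- Let P1, P2 ⊆ Ω be nonempty subsets with |P2| < |P1| < |Ω|, let r ∈ {1, …, |Ω|}, and suppose TPR(P1, r) = TPR(P2, r) = t. If FPR(P2, r) < t, then FPR(P1, r) < FPR(P2, r). -/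
open Finset

variable {α : Type*} [Fintype α] [DecidableEq α]

lemma topSet_card_add (rk : α ≃ Fin (Fintype.card α)) (S : Finset α) (r : ℕ)
    (hr : r ≤ Fintype.card α) :
    (topSet rk S r).card + (topSet rk Sᶜ r).card = r := by
  have hdisj : Disjoint (topSet rk S r) (topSet rk Sᶜ r) :=
    (disjoint_compl_right.mono (filter_subset _ _) (filter_subset _ _))
  have hunion : topSet rk S r ∪ topSet rk Sᶜ r
      = univ.filter fun x => ((rk x : Fin (Fintype.card α)) : ℕ) < r := by
    simp [topSet, ← filter_union, union_compl]
  have hcu := card_union_of_disjoint hdisj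
  rw [hunion] at hcu
  rw [← hcu]
  have hm : ∀ m ∈ Finset.range r, m < Fintype.card α := fun m hm =>
    lt_of_lt_of_le (Finset.mem_range.mp hm) hr
  have h2 : (univ.filter fun x => ((rk x : Fin (Fintype.card α)) : ℕ) < r)
      = ((Finset.range r).attachFin hm).map (rk.symm.toEmbedding) := by
    ext x
    simp [Finset.mem_map, Equiv.symm_apply_eq, Finset.mem_attachFin, eq_comm]
  rw [h2, card_map, Finset.card_attachFin, Finset.card_range]

theorem stmt_10 (rk : α ≃ Fin (Fintype.card α)) (P1 P2 : Finset α)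
    (h1 : P1.Nonempty) (h2 : P2.Nonempty)
    (hcard : P2.card < P1.card) (hlt : P1.card < Fintype.card α)
    (r : ℕ) (hr1 : 1 ≤ r) (hr2 : r ≤ Fintype.card α)
    (t : ℝ) (ht1 : TPR rk P1 r = t) (ht2 : TPR rk P2 r = t)
    (hfpr : FPR rk P2 r < t) :
    FPR rk P1 r < FPR rk P2 r := by
  have hadd1 := topSet_card_add rk P1 r hr2
  have hadd2 := topSet_card_add rk P2 r hr2
  have hc1 : (P1ᶜ).card = Fintype.card α - P1.card := card_compl P1
  have hc2 : (P2ᶜ).card = Fintype.card α - P2.card := card_compl P2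
  have hp2N : P2.card < Fintype.card α := hcard.trans hlt
  -- real casts
  have hq1 : (0:ℝ) < ((P1ᶜ).card : ℝ) := by
    rw [hc1]; exact_mod_cast Nat.cast_pos.mpr (Nat.sub_pos_of_lt hlt)
  have hq2 : (0:ℝ) < ((P2ᶜ).card : ℝ) := by
    rw [hc2]; exact_mod_cast Nat.cast_pos.mpr (Nat.sub_pos_of_lt hp2N)
  have hp1 : (0:ℝ) < (P1.card : ℝ) := by exact_mod_cast card_pos.mpr h1
  have hp2 : (0:ℝ) < (P2.card : ℝ) := by exact_mod_cast card_pos.mpr h2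
  have ha1 : ((topSet rk P1 r).card : ℝ) = t * P1.card := by
    rw [← ht1, TPR, div_mul_cancel₀ _ hp1.ne']
  have ha2 : ((topSet rk P2 r).card : ℝ) = t * P2.card := by
    rw [← ht2, TPR, div_mul_cancel₀ _ hp2.ne']
  have hb1 : ((topSet rk P1ᶜ r).card : ℝ) = r - t * P1.card := by
    have : ((topSet rk P1 r).card : ℝ) + ((topSet rk P1ᶜ r).card : ℝ) = r := by
      exact_mod_cast congrArg (Nat.cast : ℕ → ℝ) hadd1
    linarith [ha1]
  have hb2 : ((topSet rk P2ᶜ r).card : ℝ) = r - t * P2.card := by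
    have : ((topSet rk P2 r).card : ℝ) + ((topSet rk P2ᶜ r).card : ℝ) = r := by
      exact_mod_cast congrArg (Nat.cast : ℕ → ℝ) hadd2
    linarith [ha2]
  have hF1 : FPR rk P1 r = (r - t * P1.card) / ((P1ᶜ).card : ℝ) := by
    rw [FPR, TPR, hb1]
  have hF2 : FPR rk P2 r = (r - t * P2.card) / ((P2ᶜ).card : ℝ) := by
    rw [FPR, TPR, hb2]
  have hq1N : ((P1ᶜ).card : ℝ) = (Fintype.card α:ℝ) - P1.card := by
    rw [hc1]; push_cast [Nat.cast_sub hlt.le]; ring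
  have hq2N : ((P2ᶜ).card : ℝ) = (Fintype.card α:ℝ) - P2.card := by
    rw [hc2]; push_cast [Nat.cast_sub hp2N.le]; ring
  -- hfpr gives r < t * Fintype.card α
  rw [hF2] at hfpr
  have hrtN : (r:ℝ) < t * Fintype.card α := by
    rw [div_lt_iff₀ hq2, hq2N] at hfpr
    nlinarith
  rw [hF1, hF2, div_lt_div_iff₀ hq1 hq2, hq1N, hq2N]
  have hpp : (P2.card : ℝ) < P1.card := by exact_mod_cast hcard
  nlinarith
end

section
/- Let P1, P2 ⊆ Ω be nonempty subsets with |P2| < |P1| < |Ω|, let r ∈ {1, …, |Ω|}, and suppose TPR(P1, r) = TPR(P2, r) = t. If FPR(P2, r) > t, then FPR(P1, r) > FPR(P2, r). -/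
open Finset

variable {α : Type*} [Fintype α] [DecidableEq α]

lemma top_compl_card (rk : α ≃ Fin (Fintype.card α)) (S : Finset α) (r : ℕ)
    (hr : r ≤ Fintype.card α) :
    (topSet rk Sᶜ r).card + (topSet rk S r).card = r := by
  have hdisj : Disjoint (topSet rk Sᶜ r) (topSet rk S r) :=
    (disjoint_filter_filter (disjoint_compl_left)).symm.symm
  have hunion : topSet rk Sᶜ r ∪ topSet rk S r
      = Finset.univ.filter fun x => ((rk x : Fin (Fintype.card α)) : ℕ) < r := by
    rw [topSet, topSet, ← filter_union]
    have : Sᶜ ∪ S = (Finset.univ : Finset α) := by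
      ext x; by_cases h : x ∈ S <;> simp [h]
    rw [this]
  have e : {x // ((rk x : Fin (Fintype.card α)) : ℕ) < r}
      ≃ {i : Fin (Fintype.card α) // (i : ℕ) < r} := rk.subtypeEquiv fun x => Iff.rfl
  have hcard : (Finset.univ.filter fun x => ((rk x : Fin (Fintype.card α)) : ℕ) < r).card = r := by
    rw [← Fintype.card_subtype, Fintype.card_congr e, Fintype.card_fin_lt_of_le hr]
  rw [← card_union_of_disjoint hdisj, hunion, hcard]

theorem stmt_11 (rk : α ≃ Fin (Fintype.card α)) (P1 P2 : Finset α)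
    (h1 : P1.Nonempty) (h2 : P2.Nonempty)
    (hcard : P2.card < P1.card) (hlt : P1.card < Fintype.card α)
    (r : ℕ) (hr1 : 1 ≤ r) (hr2 : r ≤ Fintype.card α)
    (t : ℝ) (ht1 : TPR rk P1 r = t) (ht2 : TPR rk P2 r = t)
    (hfpr : FPR rk P2 r > t) :
    FPR rk P1 r > FPR rk P2 r := by
  have hp1 : (0:ℝ) < (P1.card : ℝ) := by exact_mod_cast h1.card_pos
  have hp2 : (0:ℝ) < (P2.card : ℝ) := by exact_mod_cast h2.card_pos
  have hn1 : (P1.card : ℝ) < (Fintype.card α : ℝ) := by exact_mod_cast hlt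
  have hn2 : (P2.card : ℝ) < (P1.card : ℝ) := by exact_mod_cast hcard
  -- top counts
  have ha : ((topSet rk P1 r).card : ℝ) = t * P1.card := by
    rw [TPR] at ht1
    field_simp at ht1
    linarith
  have hb : ((topSet rk P2 r).card : ℝ) = t * P2.card := by
    rw [TPR] at ht2
    field_simp at ht2
    linarith
  -- complement counts
  have hcc1 : ((P1ᶜ).card : ℝ) = (Fintype.card α : ℝ) - P1.card := by
    rw [card_compl]; push_cast [Nat.cast_sub hlt.le]; ring
  have hcc2 : ((P2ᶜ).card : ℝ) = (Fintype.card α : ℝ) - P2.card := by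
    rw [card_compl]; push_cast [Nat.cast_sub (hcard.trans hlt).le]; ring
  have key1 : ((topSet rk P1ᶜ r).card : ℝ) = (r : ℝ) - t * P1.card := by
    have := top_compl_card rk P1 r hr2
    have : ((topSet rk P1ᶜ r).card : ℝ) + ((topSet rk P1 r).card : ℝ) = (r : ℝ) := by
      exact_mod_cast congrArg (Nat.cast : ℕ → ℝ) this
    linarith [ha]
  have key2 : ((topSet rk P2ᶜ r).card : ℝ) = (r : ℝ) - t * P2.card := by
    have := top_compl_card rk P2 r hr2
    have : ((topSet rk P2ᶜ r).card : ℝ) + ((topSet rk P2 r).card : ℝ) = (r : ℝ) := by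
      exact_mod_cast congrArg (Nat.cast : ℕ → ℝ) this
    linarith [hb]
  have hf1 : FPR rk P1 r = ((r : ℝ) - t * P1.card) / ((Fintype.card α : ℝ) - P1.card) := by
    rw [FPR, TPR, key1, hcc1]
  have hf2 : FPR rk P2 r = ((r : ℝ) - t * P2.card) / ((Fintype.card α : ℝ) - P2.card) := by
    rw [FPR, TPR, key2, hcc2]
  have hd1 : (0:ℝ) < (Fintype.card α : ℝ) - P1.card := by linarith
  have hd2 : (0:ℝ) < (Fintype.card α : ℝ) - P2.card := by linarith
  -- from hfpr : r - t*p2 > t*(n - p2), hence r > t*n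
  rw [hf2] at hfpr
  have hrt : (r : ℝ) > t * (Fintype.card α : ℝ) := by
    have := (lt_div_iff₀ hd2).mp (by linarith [hfpr] : t < ((r : ℝ) - t * P2.card) / ((Fintype.card α : ℝ) - P2.card))
    nlinarith
  rw [hf1, hf2, gt_iff_lt, div_lt_div_iff₀ hd2 hd1]
  nlinarith [mul_pos (sub_pos.mpr hn2) (sub_pos.mpr (show t * (Fintype.card α : ℝ) < (r:ℝ) from hrt))]
end
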